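/- Let X be an irreducible substructure of a bistructure B, let L ∈ X, and let X_1,…,X_k be the irreducible components of X∖{L} (the connected components of the intersection graph on the loops of X∖{L}). Then: (i) V^{X_i} ∩ V^{X_j} = ∅ for all i ≠ j; (ii) E^{X_i} ⊆ L ∪ E^X for every i; and (iii) V^X = L ∪ ⋃_{i=1}^k V^{X_i}. -/

import Mathlib

/-- An arc `(i,j)` in a diagram. -/
abbrev Arc : Type := ℕ × ℕ

/-- Two arcs cross iff `p.1 < q.1 < p.2 < q.2` or `q.1 < p.1 < q.2 < p.2`. -/
def Arc.crosses (p q : Arc) : Prop :=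
  (p.1 < q.1 ∧ q.1 < p.2 ∧ p.2 < q.2) ∨ (q.1 < p.1 ∧ p.1 < q.2 ∧ q.2 < p.2)

/-- Nesting order: `Arc.nested q p` means `q ≺ p`, i.e. `p.1 < q.1 < q.2 < p.2`. -/
def Arc.nested (q p : Arc) : Prop := p.1 < q.1 ∧ q.1 < q.2 ∧ q.2 < p.2

/-- An RNA secondary structure on `{1,…,n}` with rainbow arc `(0, n+1)`. -/
structure SecStr (n : ℕ) : Type where
  arcs : Finset Arc
  lt_of_mem : ∀ p ∈ arcs, p.1 < p.2
  le_of_mem : ∀ p ∈ arcs, p.2 ≤ n + 1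
  rainbow_mem : (0, n + 1) ∈ arcs
  matching : ∀ p ∈ arcs, ∀ q ∈ arcs, ∀ v : ℕ, 1 ≤ v → v ≤ n →
    (v = p.1 ∨ v = p.2) → (v = q.1 ∨ v = q.2) → p = q
  noncrossing : ∀ p ∈ arcs, ∀ q ∈ arcs, ¬ Arc.crosses p q

namespace SecStr

variable {n : ℕ}

/-- The loop of an arc `p` of `R`. -/
def loop (R : SecStr n) (p : Arc) : Set ℕ :=
  {v | p.1 ≤ v ∧ v ≤ p.2 ∧ ¬ ∃ q ∈ R.arcs, Arc.nested q p ∧ q.1 < v ∧ v < q.2}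

/-- A loop of `R` is the loop of one of its arcs. -/
def IsLoop (R : SecStr n) (L : Set ℕ) : Prop := ∃ p ∈ R.arcs, L = R.loop p

end SecStr
/-- A label for a loop of a bistructure: `true` tags `R`-loops, `false` tags `S`-loops,
together with the maximal arc of the loop. -/
abbrev LoopLabel : Type := Bool × Arc

/-- A bistructure `B(R,S)`: two secondary structures on the same vertex set. -/
structure Bistructure (n : ℕ) : Type where
  R : SecStr n
  S : SecStr n

namespace Bistructure

variable {n : ℕ}

/-- The loop set of a bistructure: the disjoint union of the `R`-loops and `S`-loops,
encoded as tagged arcs. -/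
def labels (B : Bistructure n) : Finset LoopLabel :=
  B.R.arcs.image (fun p => (true, p)) ∪ B.S.arcs.image (fun p => (false, p))

/-- The vertex set of the loop with label `x`. -/
def loopSet (B : Bistructure n) (x : LoopLabel) : Set ℕ :=
  if x.1 then B.R.loop x.2 else B.S.loop x.2

/-- Two loops intersect. -/
def intersects (B : Bistructure n) (a b : LoopLabel) : Prop :=
  (B.loopSet a ∩ B.loopSet b).Nonempty

end Bistructure

open scoped Classical

namespace Bistructure

variable {n : ℕ}

/-- The vertex set `V^X` of a substructure `X` (a set of loops of `B`). -/
def Vset (B : Bistructure n) (X : Finset LoopLabel) : Set ℕ :=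
  ⋃ L ∈ X, B.loopSet L

/-- The exposed vertex set `E^X = V^X ∩ V^{B∖X}` of a substructure `X`. -/
def exposed (B : Bistructure n) (X : Finset LoopLabel) : Set ℕ :=
  B.Vset X ∩ B.Vset (B.labels \ X)

/-- A substructure is reducible if it can be partitioned into two nonempty parts such
that every loop of one part is disjoint from every loop of the other. -/
def Reducible (B : Bistructure n) (X : Finset LoopLabel) : Prop :=
  ∃ X1 X2 : Finset LoopLabel, X1 ∪ X2 = X ∧ Disjoint X1 X2 ∧
    X1.Nonempty ∧ X2.Nonempty ∧ ∀ a ∈ X1, ∀ b ∈ X2, ¬ B.intersects a b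

/-- The connected component of `L` in the loop intersection graph of `X`. -/
noncomputable def comp (B : Bistructure n) (X : Finset LoopLabel) (L : LoopLabel) :
    Finset LoopLabel :=
  X.filter (fun P =>
    Relation.ReflTransGen (fun a b => a ∈ X ∧ b ∈ X ∧ B.intersects a b) L P)

/-- The irreducible components of a substructure `X`: the connected components of its
loop intersection graph. -/
noncomputable def comps (B : Bistructure n) (X : Finset LoopLabel) :
    Finset (Finset LoopLabel) :=
  X.image (B.comp X)

end Bistructure

/-- let `X` be an irreducible substructure of a bistructure `B`, `L ∈ X`,
and let the `Xᵢ` be the irreducible components of `X ∖ {L}`.  Then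
(i) `V^{Xᵢ} ∩ V^{Xⱼ} = ∅` for `i ≠ j`; (ii) `E^{Xᵢ} ⊆ L ∪ E^X` for every `i`; and
(iii) `V^X = L ∪ ⋃ᵢ V^{Xᵢ}`. -/
theorem stmt14 (n : ℕ) (B : Bistructure n) (X : Finset LoopLabel) (hX : X ⊆ B.labels)
    (hirr : ¬ B.Reducible X) (L : LoopLabel) (hL : L ∈ X) :
    (∀ C1 ∈ B.comps (X.erase L), ∀ C2 ∈ B.comps (X.erase L), C1 ≠ C2 →
        B.Vset C1 ∩ B.Vset C2 = ∅) ∧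
    (∀ C ∈ B.comps (X.erase L), B.exposed C ⊆ B.loopSet L ∪ B.exposed X) ∧
    B.Vset X = B.loopSet L ∪ ⋃ C ∈ (B.comps (X.erase L) : Set (Finset LoopLabel)), B.Vset C := by
  classical
  set Y := X.erase L with hYdef
  set r : LoopLabel → LoopLabel → Prop :=
    fun a b => a ∈ Y ∧ b ∈ Y ∧ B.intersects a b with hr
  have hsymm : Symmetric r := by
    rintro a b ⟨ha, hb, v, hv1, hv2⟩
    exact ⟨hb, ha, v, hv2, hv1⟩
  have hsymm' : Symmetric (Relation.ReflTransGen r) :=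
    by haveI : Std.Symm r := ⟨hsymm⟩; exact fun a b h => (Relation.ReflTransGen.symmetric).symm a b h
  have hmem : ∀ M P : LoopLabel, P ∈ B.comp Y M ↔
      P ∈ Y ∧ Relation.ReflTransGen r M P := by
    intro M P
    simp [Bistructure.comp, Finset.mem_filter, hr]
  have hcompeq : ∀ M1 M2 b : LoopLabel, b ∈ B.comp Y M1 → b ∈ B.comp Y M2 →
      B.comp Y M1 = B.comp Y M2 := by
    intro M1 M2 b h1 h2
    rw [hmem] at h1 h2
    ext P
    rw [hmem, hmem]
    constructor
    · rintro ⟨hP, hR⟩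
      exact ⟨hP, (h2.2.trans (hsymm' h1.2)).trans hR⟩
    · rintro ⟨hP, hR⟩
      exact ⟨hP, (h1.2.trans (hsymm' h2.2)).trans hR⟩
  have hVmem : ∀ (C : Finset LoopLabel) (v : ℕ),
      v ∈ B.Vset C ↔ ∃ a ∈ C, v ∈ B.loopSet a := by
    intro C v; simp [Bistructure.Vset]
  -- a common step: if a is in a component and intersects b ∈ Y, then b is in it
  have hstep : ∀ M a b : LoopLabel, a ∈ B.comp Y M → b ∈ Y →
      B.intersects a b → b ∈ B.comp Y M := by
    intro M a b ha hb hi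
    rw [hmem] at ha ⊢
    exact ⟨hb, ha.2.tail ⟨ha.1, hb, hi⟩⟩
  refine ⟨?_, ?_, ?_⟩
  · -- (i)
    intro C1 hC1 C2 hC2 hne
    simp only [Bistructure.comps, Finset.mem_image] at hC1 hC2
    obtain ⟨M1, _, rfl⟩ := hC1
    obtain ⟨M2, _, rfl⟩ := hC2
    by_contra h
    obtain ⟨v, hv1, hv2⟩ := Set.nonempty_iff_ne_empty.2 h
    obtain ⟨a, ha, hva⟩ := (hVmem _ v).1 hv1
    obtain ⟨b, hb, hvb⟩ := (hVmem _ v).1 hv2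
    have hbY : b ∈ Y := ((hmem _ _).1 hb).1
    have hb1 : b ∈ B.comp Y M1 := hstep M1 a b ha hbY ⟨v, hva, hvb⟩
    exact hne (hcompeq M1 M2 b hb1 hb)
  · -- (ii)
    intro C hC v hv
    simp only [Bistructure.comps, Finset.mem_image] at hC
    obtain ⟨M, hM, rfl⟩ := hC
    obtain ⟨hv1, hv2⟩ := hv
    obtain ⟨a, ha, hva⟩ := (hVmem _ v).1 hv1
    obtain ⟨b, hb, hvb⟩ := (hVmem _ v).1 hv2
    rw [Finset.mem_sdiff] at hb
    have haY : a ∈ Y := ((hmem _ _).1 ha).1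
    have haX : a ∈ X := Finset.mem_of_mem_erase haY
    by_cases hbX : b ∈ X
    · by_cases hbL : b = L
      · exact Or.inl (hbL ▸ hvb)
      · have hbY : b ∈ Y := Finset.mem_erase.2 ⟨hbL, hbX⟩
        exact absurd (hstep M a b ha hbY ⟨v, hva, hvb⟩) hb.2
    · refine Or.inr ⟨(hVmem X v).2 ⟨a, haX, hva⟩, (hVmem _ v).2 ⟨b, ?_, hvb⟩⟩
      exact Finset.mem_sdiff.2 ⟨hb.1, hbX⟩
  · -- (iii)
    ext v
    constructor
    · intro hv
      obtain ⟨a, ha, hva⟩ := (hVmem X v).1 hv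
      by_cases haL : a = L
      · exact Or.inl (haL ▸ hva)
      · have haY : a ∈ Y := Finset.mem_erase.2 ⟨haL, ha⟩
        have hself : a ∈ B.comp Y a := (hmem a a).2 ⟨haY, Relation.ReflTransGen.refl⟩
        refine Or.inr ?_
        rw [Set.mem_iUnion₂]
        exact ⟨B.comp Y a, by
          simp only [Finset.mem_coe, Bistructure.comps, Finset.mem_image]
          exact ⟨a, haY, rfl⟩, (hVmem _ v).2 ⟨a, hself, hva⟩⟩
    · intro hv
      rcases hv with hv | hv
      · exact (hVmem X v).2 ⟨L, hL, hv⟩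
      · rw [Set.mem_iUnion₂] at hv
        obtain ⟨C, hC, hvC⟩ := hv
        simp only [Finset.mem_coe, Bistructure.comps, Finset.mem_image] at hC
        obtain ⟨M, hM, rfl⟩ := hC
        obtain ⟨a, ha, hva⟩ := (hVmem _ v).1 hvC
        have haY : a ∈ Y := ((hmem _ _).1 ha).1
        exact (hVmem X v).2 ⟨a, Finset.mem_of_mem_erase haY, hva⟩
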